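/- Let f be a nonconstant real-analytic function on an open neighborhood of the interval [0,1]. Then N(f) ≤ N(f') + 1, where N(g) denotes the number of zeros of g in [0,1] counted with multiplicities. -/

import Mathlib

open Set Filter Topology

private lemma iterZero {V : Set ℝ} (hV : IsOpen V) {g : ℝ → ℝ} (hg : Set.EqOn g 0 V) :
    ∀ n : ℕ, ∀ x ∈ V, iteratedDeriv n g x = 0 := by
  intro n
  induction n with
  | zero => intro x hx; simpa [iteratedDeriv_zero] using hg hx
  | succ n ih =>
    intro x hx
    rw [iteratedDeriv_succ]
    have h1 : iteratedDeriv n g =ᶠ[𝓝 x] fun _ => (0:ℝ) :=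
      Filter.eventually_of_mem (hV.mem_nhds hx) ih
    rw [h1.deriv_eq]
    simp

private lemma evZero {g : ℝ → ℝ} {x : ℝ} (hg : AnalyticAt ℝ g x)
    (h : ∀ n, iteratedDeriv n g x = 0) : ∀ᶠ z in 𝓝 x, g z = 0 := by
  obtain ⟨p, r, hp⟩ := hg
  have key : ∀ y ∈ EMetric.ball (0:ℝ) r, g (x + y) = 0 := by
    intro y hy
    have hs := hp.hasSum_iteratedFDeriv hy
    have hz : (fun n => (n.factorial : ℝ)⁻¹ • (iteratedFDeriv ℝ n g x fun _ => y)) = fun _ => (0:ℝ) := by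
      funext n
      rw [iteratedFDeriv_apply_eq_iteratedDeriv_mul_prod, h n]
      simp
    rw [hz] at hs
    exact hs.unique hasSum_zero
  filter_upwards [EMetric.ball_mem_nhds x hp.r_pos] with z hz
  have hmem : z - x ∈ EMetric.ball (0:ℝ) r := by
    change edist z x < r at hz
    change edist (z - x) 0 < r
    calc edist (z - x) 0 = edist z x := by rw [← sub_self x, edist_sub_right]
      _ < r := hz
  simpa using key (z - x) hmem

private lemma sInfShift {f : ℝ → ℝ} {x : ℝ}
    (h : sInf {j : ℕ | iteratedDeriv j f x ≠ 0} ≠ 0) :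
    sInf {j : ℕ | iteratedDeriv j (deriv f) x ≠ 0} + 1
      = sInf {j : ℕ | iteratedDeriv j f x ≠ 0} := by
  have hne : {j : ℕ | iteratedDeriv j f x ≠ 0}.Nonempty := by
    by_contra hc
    rw [Set.not_nonempty_iff_eq_empty] at hc
    rw [hc, Nat.sInf_empty] at h
    exact h rfl
  have hmem : sInf {j : ℕ | iteratedDeriv j f x ≠ 0} ∈ {j : ℕ | iteratedDeriv j f x ≠ 0} :=
    Nat.sInf_mem hne
  have hfun : ∀ j : ℕ, iteratedDeriv j (deriv f) x = iteratedDeriv (j+1) f x := by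
    intro j; rw [iteratedDeriv_succ']
  have hset : {j : ℕ | iteratedDeriv j (deriv f) x ≠ 0}
      = {j : ℕ | iteratedDeriv (j+1) f x ≠ 0} := by
    ext j; simp [hfun j]
  rw [hset]
  set m := sInf {j : ℕ | iteratedDeriv j f x ≠ 0} with hm
  have h1 : m - 1 ∈ {j : ℕ | iteratedDeriv (j+1) f x ≠ 0} := by
    show iteratedDeriv (m - 1 + 1) f x ≠ 0
    rw [Nat.sub_add_cancel (Nat.one_le_iff_ne_zero.mpr h)]
    exact hmem
  have h2 : sInf {j : ℕ | iteratedDeriv (j+1) f x ≠ 0} ≤ m - 1 := Nat.sInf_le h1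
  have h3 : sInf {j : ℕ | iteratedDeriv (j+1) f x ≠ 0}
      ∈ {j : ℕ | iteratedDeriv (j+1) f x ≠ 0} := Nat.sInf_mem ⟨m-1, h1⟩
  have h4 : m ≤ sInf {j : ℕ | iteratedDeriv (j+1) f x ≠ 0} + 1 := Nat.sInf_le h3
  omega

private lemma finZero {V : Set ℝ} (hVc : IsPreconnected V) {g : ℝ → ℝ}
    (hg : AnalyticOnNhd ℝ g V) (hI : Set.Icc (0:ℝ) 1 ⊆ V) (hnz : ¬ Set.EqOn g 0 V) :
    {x ∈ Set.Icc (0:ℝ) 1 | g x = 0}.Finite := by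
  by_contra hc
  have hinf : {x ∈ Set.Icc (0:ℝ) 1 | g x = 0}.Infinite := hc
  obtain ⟨z, hz, hacc⟩ := hinf.exists_accPt_of_subset_isCompact isCompact_Icc (Set.sep_subset _ _)
  rw [accPt_iff_frequently] at hacc
  have freq : ∃ᶠ w in 𝓝[≠] z, g w = 0 := by
    rw [frequently_nhdsWithin_iff]
    exact hacc.mono (fun y hy => ⟨hy.2.2, hy.1⟩)
  exact hnz (hg.eqOn_zero_of_preconnected_of_frequently_eq_zero hVc (hI hz) freq)

theorem stmt2 (U : Set ℝ) (hU : IsOpen U) (hUI : Set.Icc (0:ℝ) 1 ⊆ U)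
    (f : ℝ → ℝ) (hf : AnalyticOnNhd ℝ f U)
    (hnc : ∃ x ∈ U, ∃ y ∈ U, f x ≠ f y) :
    (∑ᶠ x ∈ Set.Icc (0:ℝ) 1, sInf {j : ℕ | iteratedDeriv j f x ≠ 0})
      ≤ (∑ᶠ x ∈ Set.Icc (0:ℝ) 1, sInf {j : ℕ | iteratedDeriv j (deriv f) x ≠ 0}) + 1 := by
  classical
  have h0I : (0:ℝ) ∈ Set.Icc (0:ℝ) 1 := Set.left_mem_Icc.mpr zero_le_one
  set V := connectedComponentIn U 0 with hVdef
  have hVopen : IsOpen V := hU.connectedComponentIn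
  have hVconn : IsPreconnected V := isPreconnected_connectedComponentIn
  have hIV : Set.Icc (0:ℝ) 1 ⊆ V :=
    isPreconnected_Icc.subset_connectedComponentIn h0I hUI
  have hfV : AnalyticOnNhd ℝ f V := hf.mono (connectedComponentIn_subset U 0)
  have hf'V : AnalyticOnNhd ℝ (deriv f) V := hfV.deriv
  set F : ℝ → ℕ := fun x => sInf {j : ℕ | iteratedDeriv j f x ≠ 0} with hF
  set G : ℝ → ℕ := fun x => sInf {j : ℕ | iteratedDeriv j (deriv f) x ≠ 0} with hG
  have fact1 : ∀ x, F x ≠ 0 → f x = 0 := by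
    intro x hx
    by_contra h
    exact hx (Nat.sInf_eq_zero.mpr (Or.inl (by simpa [iteratedDeriv_zero] using h)))
  have fact2 : ∀ x, G x ≠ 0 → deriv f x = 0 := by
    intro x hx
    by_contra h
    exact hx (Nat.sInf_eq_zero.mpr (Or.inl (by simpa [iteratedDeriv_zero] using h)))
  by_cases hA : ∀ x ∈ Set.Icc (0:ℝ) 1, ∃ j, iteratedDeriv j (deriv f) x ≠ 0
  swap
  · -- degenerate case : f' vanishes identically near [0,1], so every order is 0
    push_neg at hA
    obtain ⟨x₀, hx₀, hall⟩ := hA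
    have hev : ∀ᶠ z in 𝓝 x₀, deriv f z = 0 := evZero (hf'V x₀ (hIV hx₀)) hall
    have hzero : Set.EqOn (deriv f) 0 V :=
      hf'V.eqOn_zero_of_preconnected_of_eventuallyEq_zero hVconn (hIV hx₀)
        (hev.mono fun z h => h)
    have hL : ∀ x ∈ Set.Icc (0:ℝ) 1, F x = 0 := by
      intro x hx
      rcases eq_or_ne (f x) 0 with h | h
      · have hemp : {j : ℕ | iteratedDeriv j f x ≠ 0} = ∅ := by
          ext j
          simp only [Set.mem_setOf_eq, Set.mem_empty_iff_false, iff_false, not_not]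
          cases j with
          | zero => simpa [iteratedDeriv_zero] using h
          | succ n =>
            rw [iteratedDeriv_succ']
            exact iterZero hVopen hzero n x (hIV hx)
        show sInf {j : ℕ | iteratedDeriv j f x ≠ 0} = 0
        rw [hemp, Nat.sInf_empty]
      · exact Nat.sInf_eq_zero.mpr (Or.inl (by simpa [iteratedDeriv_zero] using h))
    calc (∑ᶠ x ∈ Set.Icc (0:ℝ) 1, F x) = ∑ᶠ x ∈ Set.Icc (0:ℝ) 1, (0:ℕ) :=
          finsum_mem_congr rfl hL
      _ = 0 := by simp
      _ ≤ _ := Nat.zero_le _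
  · -- main case
    have hf'ne : ¬ Set.EqOn (deriv f) 0 V := by
      intro h
      obtain ⟨j, hj⟩ := hA 0 h0I
      exact hj (iterZero hVopen h j 0 (hIV h0I))
    have hfne : ¬ Set.EqOn f 0 V := by
      intro h
      apply hf'ne
      intro x hx
      have h1 := iterZero hVopen h 1 x hx
      rwa [iteratedDeriv_one] at h1
    have hZf := finZero hVconn hfV hIV hfne
    have hZf' := finZero hVconn hf'V hIV hf'ne
    have hsF : (Set.Icc (0:ℝ) 1 ∩ Function.support F).Finite :=
      hZf.subset (fun x hx => ⟨hx.1, fact1 x hx.2⟩)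
    have hsG : (Set.Icc (0:ℝ) 1 ∩ Function.support G).Finite :=
      hZf'.subset (fun x hx => ⟨hx.1, fact2 x hx.2⟩)
    rw [finsum_mem_eq_sum F hsF, finsum_mem_eq_sum G hsG]
    set T := hsF.toFinset with hT
    set T' := hsG.toFinset with hT'
    have hmemT : ∀ x, x ∈ T ↔ x ∈ Set.Icc (0:ℝ) 1 ∧ F x ≠ 0 := by
      intro x
      rw [hT, Set.Finite.mem_toFinset]
      exact Iff.rfl
    have hmemT' : ∀ x, x ∈ T' ↔ x ∈ Set.Icc (0:ℝ) 1 ∧ G x ≠ 0 := by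
      intro x
      rw [hT', Set.Finite.mem_toFinset]
      exact Iff.rfl
    set k := T.card with hk
    rcases Nat.eq_zero_or_pos k with hk0 | hkpos
    · have hTe : T = ∅ := Finset.card_eq_zero.mp (hk ▸ hk0)
      rw [hTe, Finset.sum_empty]
      exact Nat.zero_le _
    · have e := T.orderIsoOfFin hk.symm
      have hlt1 : ∀ i : Fin (k-1), (i:ℕ) < k := fun i => lt_of_lt_of_le i.2 (Nat.sub_le k 1)
      have hlt2 : ∀ i : Fin (k-1), (i:ℕ)+1 < k := fun i => by
        have := i.2; omega
      set a : Fin (k-1) → ℝ := fun i => ((e ⟨i, hlt1 i⟩ : T) : ℝ) with ha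
      set b : Fin (k-1) → ℝ := fun i => ((e ⟨(i:ℕ)+1, hlt2 i⟩ : T) : ℝ) with hb
      have haT : ∀ i, a i ∈ T := fun i => (e ⟨i, hlt1 i⟩).2
      have hbT : ∀ i, b i ∈ T := fun i => (e ⟨(i:ℕ)+1, hlt2 i⟩).2
      have hRolle : ∀ i : Fin (k-1), ∃ c, c ∈ Set.Ioo (a i) (b i) ∧ deriv f c = 0 := by
        intro i
        have hab : a i < b i := by
          have h := e.strictMono (show (⟨(i:ℕ), hlt1 i⟩ : Fin k) < ⟨(i:ℕ)+1, hlt2 i⟩ from by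
            rw [Fin.mk_lt_mk]; omega)
          exact h
        have haI : a i ∈ Set.Icc (0:ℝ) 1 := ((hmemT _).mp (haT i)).1
        have hbI : b i ∈ Set.Icc (0:ℝ) 1 := ((hmemT _).mp (hbT i)).1
        have hcont : ContinuousOn f (Set.Icc (a i) (b i)) :=
          hf.continuousOn.mono (subset_trans (Set.Icc_subset_Icc haI.1 hbI.2) hUI)
        have hfa : f (a i) = 0 := fact1 _ ((hmemT _).mp (haT i)).2
        have hfb : f (b i) = 0 := fact1 _ ((hmemT _).mp (hbT i)).2
        obtain ⟨c, hc1, hc2⟩ := exists_deriv_eq_zero hab hcont (hfa.trans hfb.symm)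
        exact ⟨c, hc1, hc2⟩
      choose c hc1 hc2 using hRolle
      have hcI : ∀ i, c i ∈ Set.Icc (0:ℝ) 1 := by
        intro i
        have haI : a i ∈ Set.Icc (0:ℝ) 1 := ((hmemT _).mp (haT i)).1
        have hbI : b i ∈ Set.Icc (0:ℝ) 1 := ((hmemT _).mp (hbT i)).1
        exact ⟨le_of_lt (lt_of_le_of_lt haI.1 (hc1 i).1),
               le_of_lt (lt_of_lt_of_le (hc1 i).2 hbI.2)⟩
      have hGc : ∀ i, 1 ≤ G (c i) := by
        intro i
        have hne : {j : ℕ | iteratedDeriv j (deriv f) (c i) ≠ 0}.Nonempty := hA (c i) (hcI i)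
        have h0 : G (c i) ≠ 0 := by
          intro h
          have hm := Nat.sInf_mem hne
          rw [show sInf {j : ℕ | iteratedDeriv j (deriv f) (c i) ≠ 0} = 0 from h] at hm
          exact hm (by simpa [iteratedDeriv_zero] using hc2 i)
        omega
      have hcmono : StrictMono c := by
        intro i j hij
        have h3 : b i ≤ a j := by
          have hle : (⟨(i:ℕ)+1, hlt2 i⟩ : Fin k) ≤ ⟨(j:ℕ), hlt1 j⟩ := by
            rw [Fin.mk_le_mk]
            exact hij
          have := e.monotone hle
          exact this
        calc c i < b i := (hc1 i).2
          _ ≤ a j := h3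
          _ < c j := (hc1 j).1
      set C : Finset ℝ := Finset.image c Finset.univ with hC
      have hCcard : C.card = k - 1 := by
        rw [hC, Finset.card_image_of_injective _ hcmono.injective, Finset.card_univ,
          Fintype.card_fin]
      have hCT : ∀ x ∈ C, x ∉ T := by
        intro x hx hxT
        obtain ⟨i, -, rfl⟩ := Finset.mem_image.mp hx
        set m := e.symm ⟨c i, hxT⟩ with hmdef
        have hm : ((e m : T) : ℝ) = c i := by rw [hmdef, OrderIso.apply_symm_apply]
        have h1 : a i < ((e m : T) : ℝ) := by rw [hm]; exact (hc1 i).1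
        have h2 : ((e m : T) : ℝ) < b i := by rw [hm]; exact (hc1 i).2
        have hlow : (⟨(i:ℕ), hlt1 i⟩ : Fin k) < m := e.lt_iff_lt.mp (Subtype.coe_lt_coe.mp h1)
        have hhigh : m < ⟨(i:ℕ)+1, hlt2 i⟩ := e.lt_iff_lt.mp (Subtype.coe_lt_coe.mp h2)
        rw [Fin.lt_def] at hlow hhigh
        simp only [Fin.val_mk] at hlow hhigh
        omega
      have hsub : (T.filter fun x => G x ≠ 0) ∪ C ⊆ T' := by
        intro x hx
        rcases Finset.mem_union.mp hx with hx | hx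
        · obtain ⟨hxT, hGx⟩ := Finset.mem_filter.mp hx
          exact (hmemT' x).mpr ⟨((hmemT x).mp hxT).1, hGx⟩
        · obtain ⟨i, -, rfl⟩ := Finset.mem_image.mp hx
          exact (hmemT' _).mpr ⟨hcI i, by have := hGc i; omega⟩
      have hdisj : Disjoint (T.filter fun x => G x ≠ 0) C := by
        rw [Finset.disjoint_right]
        intro x hx hxf
        exact hCT x hx (Finset.mem_filter.mp hxf).1
      have hsum1 : ∑ x ∈ T, G x + (k-1) ≤ ∑ x ∈ T', G x := by
        calc ∑ x ∈ T, G x + (k-1)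
            = ∑ x ∈ T.filter (fun x => G x ≠ 0), G x + ∑ _x ∈ C, 1 := by
              rw [Finset.sum_filter_ne_zero, Finset.sum_const, smul_eq_mul, mul_one, hCcard]
          _ ≤ ∑ x ∈ T.filter (fun x => G x ≠ 0), G x + ∑ x ∈ C, G x := by
              refine Nat.add_le_add_left (Finset.sum_le_sum fun x hx => ?_) _
              obtain ⟨i, -, rfl⟩ := Finset.mem_image.mp hx
              exact hGc i
          _ = ∑ x ∈ (T.filter (fun x => G x ≠ 0)) ∪ C, G x := (Finset.sum_union hdisj).symm
          _ ≤ ∑ x ∈ T', G x := Finset.sum_le_sum_of_subset hsub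
      have hsum2 : ∑ x ∈ T, F x = ∑ x ∈ T, G x + k := by
        calc ∑ x ∈ T, F x = ∑ x ∈ T, (G x + 1) :=
              Finset.sum_congr rfl (fun x hx => (sInfShift ((hmemT x).mp hx).2).symm)
          _ = ∑ x ∈ T, G x + k := by
              rw [Finset.sum_add_distrib, Finset.sum_const, smul_eq_mul, mul_one, ← hk]
      omega
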